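/- arXiv:1908.11035 — 2 statements merged into one kernel-verified Lean document; each statement's English description precedes it below -/
import Mathlib

section
/- Gagliardo–Nirenberg inequality on ℝ: there exists a constant C such that for every Schwartz function u on ℝ, ‖u‖_{L^∞(ℝ)} ≤ C ‖u‖_{L²(ℝ)}^{1/2} ‖u'‖_{L²(ℝ)}^{1/2}. -/
open MeasureTheory Filter Set Real Topology

/-- Gagliardo–Nirenberg inequality on `ℝ`:
`‖u‖_{L^∞} ≤ C ‖u‖_{L²}^{1/2} ‖u'‖_{L²}^{1/2}` for Schwartz functions. -/
theorem stmt3 : ∃ C > 0, ∀ u : SchwartzMap ℝ ℝ, ∀ x : ℝ,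
    |u x| ≤ C * (∫ y : ℝ, (u y) ^ 2) ^ ((1 : ℝ)/4) *
      (∫ y : ℝ, (deriv (fun z => u z) y) ^ 2) ^ ((1 : ℝ)/4) := by
  refine ⟨Real.sqrt 2, Real.sqrt_pos.2 (by norm_num), fun u x => ?_⟩
  have hderiv_eq : (deriv (fun z => u z)) = deriv u := rfl
  rw [hderiv_eq]
  set u' : SchwartzMap ℝ ℝ := SchwartzMap.derivCLM ℝ ℝ u with hu'
  have hu'_eq : ∀ y, deriv u y = u' y := fun y => (SchwartzMap.derivCLM_apply ℝ u y).symm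
  -- boundedness of u
  have hbdd : ∃ C, ∀ y, ‖u y‖ ≤ C := ⟨_, fun y => u.norm_le_seminorm ℝ y⟩
  -- integrability
  have hu_int : Integrable (fun y => u y) volume := u.integrable
  have hu'_int : Integrable (fun y => u' y) volume := u'.integrable
  have huu'_int : Integrable (fun y => u y * u' y) volume :=
    hu'_int.bdd_mul u.continuous.aestronglyMeasurable (ae_of_all _ hbdd.choose_spec)
  have hsq_int : Integrable (fun y => u y * u y) volume :=
    hu_int.bdd_mul u.continuous.aestronglyMeasurable (ae_of_all _ hbdd.choose_spec)
  have hsq'_int : Integrable (fun y => u' y * u' y) volume :=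
    hu'_int.bdd_mul u'.continuous.aestronglyMeasurable
      (ae_of_all _ fun y => u'.norm_le_seminorm ℝ y)
  have hf'_int : Integrable (fun y => 2 * u y * deriv u y) volume := by
    have := huu'_int.const_mul 2
    refine this.congr (Filter.Eventually.of_forall fun y => ?_)
    simp only [hu'_eq]; ring
  -- Memℒp
  have hu_mem : MemLp (fun y => u y) 2 volume := by
    rw [memLp_two_iff_integrable_sq u.continuous.aestronglyMeasurable]
    exact hsq_int.congr (Filter.Eventually.of_forall fun y => by ring)
  have hu'_mem : MemLp (fun y => u' y) 2 volume := by
    rw [memLp_two_iff_integrable_sq u'.continuous.aestronglyMeasurable]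
    exact hsq'_int.congr (Filter.Eventually.of_forall fun y => by ring)
  -- limit at -∞
  have h0 : Tendsto (fun y => u y) atBot (𝓝 0) := by
    have := u.toZeroAtInfty.zero_at_infty'
    exact this.mono_left (by rw [cocompact_eq_atBot_atTop]; exact le_sup_left)
  have h0sq : Tendsto (fun y => u y ^ 2) atBot (𝓝 0) := by
    have := h0.pow 2
    simpa using this
  -- FTC
  have key : ∫ y in Iic x, (2 * u y * deriv u y) = u x ^ 2 := by
    have := integral_Iic_of_hasDerivAt_of_tendsto' (a := x) (m := 0)
      (f := fun y => u y ^ 2) (f' := fun y => 2 * u y * deriv u y)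
      (fun y _ => by
        have hd : HasDerivAt (fun z => u z) (deriv u y) y :=
          u.differentiableAt.hasDerivAt
        have := hd.fun_pow 2
        simpa [mul_comm, mul_assoc, mul_left_comm] using this)
      (hf'_int.integrableOn) h0sq
    simpa using this
  -- pointwise square bound via Cauchy–Schwarz
  have habs : u x ^ 2 ≤ ∫ y, |2 * u y * deriv u y| := by
    rw [← key]
    calc ∫ y in Iic x, (2 * u y * deriv u y)
        ≤ ∫ y in Iic x, |2 * u y * deriv u y| := by
          refine integral_mono hf'_int.integrableOn
            (hf'_int.abs.integrableOn) fun y => le_abs_self _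
      _ ≤ ∫ y, |2 * u y * deriv u y| := by
          refine setIntegral_le_integral hf'_int.abs
            (Filter.Eventually.of_forall fun y => abs_nonneg _)
  have hCS : ∫ y, ‖u y‖ * ‖u' y‖ ≤
      (∫ y, ‖u y‖ ^ (2:ℝ)) ^ ((1:ℝ)/2) * (∫ y, ‖u' y‖ ^ (2:ℝ)) ^ ((1:ℝ)/2) := by
    have hpq : Real.HolderConjugate 2 2 := ⟨by norm_num, by norm_num, by norm_num⟩
    have := integral_mul_norm_le_Lp_mul_Lq (μ := volume) hpq
      (by simpa using hu_mem) (by simpa using hu'_mem)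
    simpa using this
  set I₁ : ℝ := ∫ y : ℝ, (u y) ^ 2 with hI₁
  set I₂ : ℝ := ∫ y : ℝ, (deriv u y) ^ 2 with hI₂
  have hI₁_nonneg : 0 ≤ I₁ := integral_nonneg fun y => sq_nonneg _
  have hI₂_nonneg : 0 ≤ I₂ := integral_nonneg fun y => sq_nonneg _
  have hEq1 : (∫ y, ‖u y‖ ^ (2:ℝ)) = I₁ := by
    refine integral_congr_ae (Filter.Eventually.of_forall fun y => ?_)
    show ‖u y‖ ^ (2:ℝ) = u y ^ 2
    rw [show ((2:ℝ)) = ((2:ℕ):ℝ) by norm_num, Real.rpow_natCast]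
    exact sq_abs _
  have hEq2 : (∫ y, ‖u' y‖ ^ (2:ℝ)) = I₂ := by
    refine integral_congr_ae (Filter.Eventually.of_forall fun y => ?_)
    show ‖u' y‖ ^ (2:ℝ) = deriv (⇑u) y ^ 2
    rw [show ((2:ℝ)) = ((2:ℕ):ℝ) by norm_num, Real.rpow_natCast, hu'_eq]
    exact sq_abs _
  have hmain : u x ^ 2 ≤ 2 * (I₁ ^ ((1:ℝ)/2) * I₂ ^ ((1:ℝ)/2)) := by
    have h1 : ∫ y, |2 * u y * deriv u y| = 2 * ∫ y, ‖u y‖ * ‖u' y‖ := by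
      rw [← integral_const_mul]
      refine integral_congr_ae (Filter.Eventually.of_forall fun y => ?_)
      simp only [hu'_eq, Real.norm_eq_abs, abs_mul]
      rw [abs_of_nonneg (by norm_num : (0:ℝ) ≤ 2)]; ring
    calc u x ^ 2 ≤ ∫ y, |2 * u y * deriv u y| := habs
      _ = 2 * ∫ y, ‖u y‖ * ‖u' y‖ := h1
      _ ≤ 2 * (I₁ ^ ((1:ℝ)/2) * I₂ ^ ((1:ℝ)/2)) := by
          rw [← hEq1, ← hEq2]
          exact mul_le_mul_of_nonneg_left hCS (by norm_num)
  -- conclude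
  have h14 : ∀ I : ℝ, 0 ≤ I → Real.sqrt (I ^ ((1:ℝ)/2)) = I ^ ((1:ℝ)/4) := by
    intro I hI
    rw [Real.sqrt_eq_rpow, ← Real.rpow_mul hI]
    norm_num
  calc |u x| = Real.sqrt (u x ^ 2) := (Real.sqrt_sq_eq_abs _).symm
    _ ≤ Real.sqrt (2 * (I₁ ^ ((1:ℝ)/2) * I₂ ^ ((1:ℝ)/2))) :=
        Real.sqrt_le_sqrt hmain
    _ = Real.sqrt 2 * I₁ ^ ((1:ℝ)/4) * I₂ ^ ((1:ℝ)/4) := by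
        rw [Real.sqrt_mul (by norm_num),
          Real.sqrt_mul (Real.rpow_nonneg hI₁_nonneg _), h14 I₁ hI₁_nonneg,
          h14 I₂ hI₂_nonneg, mul_assoc]
end

section
/- Logarithmic Sobolev embedding on the torus: there exists a constant C such that for every f ∈ L²(𝕋) with Fourier coefficients f̂(α) satisfying Σ_{α≠0} |α| (log(|α|+e))² |f̂(α)|² < ∞, one has ‖f − (2π)^{-1} ∫_𝕋 f dx‖_{L^∞(𝕋)} ≤ C (Σ_{α≠0} |α| (log(|α|+e))² |f̂(α)|²)^{1/2}. -/
open MeasureTheory Real AddCircle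

instance : Fact (0 < 2 * Real.pi) := ⟨by positivity⟩


lemma log_ge_one_aux (x : ℝ) (hx : 0 ≤ x) : 1 ≤ Real.log (x + Real.exp 1) := by
  have h : Real.exp 1 ≤ x + Real.exp 1 := le_add_of_nonneg_left hx
  have := Real.log_le_log (Real.exp_pos 1) h
  rwa [Real.log_exp] at this

lemma summable_nat_aux :
    Summable (fun n : ℕ => ((n : ℝ) * Real.log ((n : ℝ) + Real.exp 1) ^ 2)⁻¹) := by
  rw [← summable_condensed_iff_of_nonneg (fun n => by positivity)
      (fun m n hm hmn => ?_)]
  · -- condensed series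
    have hbase : Summable (fun n : ℕ => (Real.log (((2:ℝ) ^ n) + Real.exp 1) ^ 2)⁻¹) := by
      rw [← summable_nat_add_iff 1]
      have hsum : Summable (fun n : ℕ => (((n:ℝ)+1) ^ 2)⁻¹ * ((Real.log 2) ^ 2)⁻¹) := by
        apply Summable.mul_right
        have := (summable_nat_add_iff (f := fun n : ℕ => (((n:ℝ)) ^ 2)⁻¹) 1).mpr
          (Real.summable_nat_pow_inv.mpr one_lt_two)
        simpa using this
      apply Summable.of_nonneg_of_le (fun n => by positivity) ?_ hsum
      intro n
      have hlog2 : (0:ℝ) < Real.log 2 := Real.log_pos one_lt_two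
      have hkey : ((n:ℝ)+1) * Real.log 2 ≤ Real.log ((2:ℝ)^(n+1) + Real.exp 1) := by
        have h1 : Real.log ((2:ℝ)^(n+1)) ≤ Real.log ((2:ℝ)^(n+1) + Real.exp 1) :=
          Real.log_le_log (by positivity) (le_add_of_nonneg_right (Real.exp_pos 1).le)
        rw [Real.log_pow] at h1
        push_cast at h1 ⊢
        linarith
      have hpos : (0:ℝ) < ((n:ℝ)+1) * Real.log 2 := by positivity
      rw [← mul_inv, ← mul_pow]
      apply inv_anti₀ (by positivity)
      exact pow_le_pow_left₀ hpos.le hkey 2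
    apply hbase.congr
    intro n
    have h2 : (0:ℝ) < (2:ℝ)^n := by positivity
    have : ((2 ^ n : ℕ) : ℝ) = (2:ℝ)^n := by push_cast; ring
    rw [this, mul_inv, ← mul_assoc]
    rw [mul_inv_cancel₀ (ne_of_gt h2), one_mul]
  · -- antitone
    have h1 : (1:ℝ) ≤ (m:ℝ) := by exact_mod_cast hm
    have hmn' : (m:ℝ) ≤ (n:ℝ) := by exact_mod_cast hmn
    have hlm : (1:ℝ) ≤ Real.log ((m:ℝ) + Real.exp 1) := log_ge_one_aux _ (by positivity)
    have hll : Real.log ((m:ℝ) + Real.exp 1) ≤ Real.log ((n:ℝ) + Real.exp 1) :=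
      Real.log_le_log (by positivity) (by linarith)
    have hsq : Real.log ((m:ℝ) + Real.exp 1) ^ 2 ≤ Real.log ((n:ℝ) + Real.exp 1) ^ 2 := by
      nlinarith
    apply inv_anti₀ (by nlinarith)
    exact mul_le_mul hmn' hsq (by nlinarith) (by linarith)

noncomputable def cweight (α : ℤ) : ℝ :=
  if α = 0 then 0 else (|(α:ℝ)| * Real.log (|(α:ℝ)| + Real.exp 1) ^ 2)⁻¹

lemma cweight_nonneg (α : ℤ) : 0 ≤ cweight α := by
  unfold cweight; split <;> positivity

lemma summable_cweight : Summable cweight := by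
  have hnat : ∀ n : ℕ, cweight (n : ℤ) =
      ((n : ℝ) * Real.log ((n : ℝ) + Real.exp 1) ^ 2)⁻¹ := by
    intro n
    unfold cweight
    rcases Nat.eq_zero_or_pos n with h | h
    · simp [h]
    · rw [if_neg (by exact_mod_cast h.ne')]
      congr 2 <;> rw [abs_of_nonneg (by positivity)] <;> norm_num
  have hneg : ∀ n : ℕ, cweight (-(n : ℤ)) = cweight (n : ℤ) := by
    intro n; unfold cweight; simp
  apply Summable.of_nat_of_neg
  · exact summable_nat_aux.congr (fun n => (hnat n).symm)
  · exact summable_nat_aux.congr (fun n => ((hneg n).trans (hnat n)).symm)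

lemma cweight_pos : 0 < ∑' α, cweight α := by
  have h1 : 0 < cweight 1 := by
    unfold cweight
    rw [if_neg one_ne_zero]
    have := log_ge_one_aux (|((1:ℤ):ℝ)|) (abs_nonneg _)
    positivity
  calc (0:ℝ) < cweight 1 := h1
    _ ≤ ∑' α, cweight α := summable_cweight.le_tsum 1 (fun _ _ => cweight_nonneg _)

lemma tsum_sqrt_mul_sqrt {a b : ℤ → ℝ} (ha0 : ∀ i, 0 ≤ a i) (hb0 : ∀ i, 0 ≤ b i)
    (ha : Summable a) (hb : Summable b) :
    ∑' i, Real.sqrt (a i) * Real.sqrt (b i) ≤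
      Real.sqrt (∑' i, a i) * Real.sqrt (∑' i, b i) := by
  have hAM : ∀ i, Real.sqrt (a i) * Real.sqrt (b i) ≤ (a i + b i) / 2 := by
    intro i
    nlinarith [Real.sq_sqrt (ha0 i), Real.sq_sqrt (hb0 i), Real.sqrt_nonneg (a i),
      Real.sqrt_nonneg (b i), sq_nonneg (Real.sqrt (a i) - Real.sqrt (b i))]
  have hs : Summable (fun i => Real.sqrt (a i) * Real.sqrt (b i)) :=
    Summable.of_nonneg_of_le (fun i => by positivity) hAM ((ha.add hb).div_const 2)
  refine hs.tsum_le_of_sum_le fun s => ?_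
  have hcs := Finset.sum_mul_sq_le_sq_mul_sq s (fun i => Real.sqrt (a i))
    (fun i => Real.sqrt (b i))
  simp only [Real.sq_sqrt (ha0 _), Real.sq_sqrt (hb0 _)] at hcs
  have h1 : (∑ i ∈ s, Real.sqrt (a i) * Real.sqrt (b i)) ≤
      Real.sqrt ((∑ i ∈ s, a i) * (∑ i ∈ s, b i)) := by
    rw [Real.le_sqrt (Finset.sum_nonneg fun i _ => by positivity)
      (mul_nonneg (Finset.sum_nonneg fun i _ => ha0 i) (Finset.sum_nonneg fun i _ => hb0 i))]
    exact hcs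
  refine h1.trans ?_
  rw [Real.sqrt_mul (Finset.sum_nonneg fun i _ => ha0 i)]
  exact mul_le_mul (Real.sqrt_le_sqrt (ha.sum_le_tsum s (fun i _ => ha0 i)))
    (Real.sqrt_le_sqrt (hb.sum_le_tsum s (fun i _ => hb0 i))) (Real.sqrt_nonneg _)
    (Real.sqrt_nonneg _)


/-- Logarithmic Sobolev embedding on the torus `𝕋 = ℝ/2πℤ`:
`‖f − f̂(0)‖_{L^∞} ≤ C (∑_{α≠0} |α| (log(|α|+e))² |f̂(α)|²)^{1/2}`.
(The `α = 0` term of the sum vanishes since it carries the factor `|α|`, and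
`f̂(0) = (2π)⁻¹ ∫_𝕋 f` for the normalized Haar measure.) -/
theorem stmt4 : ∃ C > 0, ∀ f : AddCircle (2 * Real.pi) → ℂ,
    MemLp f 2 haarAddCircle →
    Summable (fun α : ℤ =>
      |(α : ℝ)| * Real.log (|(α : ℝ)| + Real.exp 1) ^ 2 * ‖fourierCoeff f α‖ ^ 2) →
    eLpNorm (fun x => f x - fourierCoeff f 0) ⊤ haarAddCircle ≤
      ENNReal.ofReal (C * Real.sqrt (∑' α : ℤ,
        |(α : ℝ)| * Real.log (|(α : ℝ)| + Real.exp 1) ^ 2 * ‖fourierCoeff f α‖ ^ 2)) := by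
  classical
  refine ⟨Real.sqrt (∑' α, cweight α), Real.sqrt_pos.mpr cweight_pos, ?_⟩
  intro f hf hs
  set w : ℤ → ℝ := fun α =>
    |(α : ℝ)| * Real.log (|(α : ℝ)| + Real.exp 1) ^ 2 * ‖fourierCoeff f α‖ ^ 2 with hw
  have hw0 : ∀ α, 0 ≤ w α := fun α => by positivity
  -- key pointwise identity
  have hkey : ∀ α : ℤ, Real.sqrt (cweight α) * Real.sqrt (w α)
      = if α = 0 then 0 else ‖fourierCoeff f α‖ := by
    intro α
    by_cases h : α = 0
    · simp [h, cweight]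
    · have h1 : (1:ℝ) ≤ |(α:ℝ)| := by
        rw [← Int.cast_abs]; exact_mod_cast Int.one_le_abs h
      have h2 : (1:ℝ) ≤ Real.log (|(α:ℝ)| + Real.exp 1) := log_ge_one_aux _ (abs_nonneg _)
      have hD : (0:ℝ) < |(α:ℝ)| * Real.log (|(α:ℝ)| + Real.exp 1) ^ 2 := by positivity
      rw [if_neg h, ← Real.sqrt_mul (cweight_nonneg α)]
      unfold cweight
      rw [if_neg h, hw]
      rw [inv_mul_cancel_left₀ hD.ne']
      exact Real.sqrt_sq (norm_nonneg _)
  -- summability of coefficient norms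
  have hnsum : Summable (fun α : ℤ => ‖fourierCoeff f α‖) := by
    have hmaj : Summable (fun α : ℤ =>
        (if α = 0 then ‖fourierCoeff f 0‖ else 0) + (cweight α + w α) / 2) := by
      apply Summable.add ?_ (((summable_cweight.add hs).div_const 2))
      exact summable_of_ne_finset_zero (s := {0}) (fun α hα => by
        simp [Finset.mem_singleton] at hα; simp [hα])
    apply Summable.of_nonneg_of_le (fun _ => norm_nonneg _) ?_ hmaj
    intro α
    by_cases h : α = 0
    · subst h
      have h1 := hw0 0
      have h2 := cweight_nonneg 0
      norm_num
      linarith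
    · have hk := hkey α
      rw [if_neg h] at hk
      rw [← hk]
      simp only [if_neg h]
      nlinarith [Real.sq_sqrt (cweight_nonneg α), Real.sq_sqrt (hw0 α),
        sq_nonneg (Real.sqrt (cweight α) - Real.sqrt (w α)), cweight_nonneg 0]
  -- sum the Fourier series in C(AddCircle, ℂ)
  have hsum2 : Summable (fun α : ℤ =>
      fourierCoeff f α • fourier (T := 2 * Real.pi) α) := by
    apply Summable.of_norm
    simpa only [norm_smul, fourier_norm, mul_one] using hnsum
  obtain ⟨g, hg⟩ := hsum2
  -- identify f with g almost everywhere
  have hcoeffL : fourierCoeff ((hf.toLp f : Lp ℂ 2 (haarAddCircle (T := 2 * Real.pi))) :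
      AddCircle (2 * Real.pi) → ℂ) = fourierCoeff f := by
    funext n
    apply integral_congr_ae
    filter_upwards [hf.coeFn_toLp] with x hx
    rw [hx]
  have hL2 : HasSum (fun α : ℤ => fourierCoeff f α • fourierLp (T := 2 * Real.pi) 2 α)
      (hf.toLp f) := by
    have := hasSum_fourier_series_L2 (hf.toLp f)
    rwa [hcoeffL] at this
  have hL2' : HasSum (fun α : ℤ => fourierCoeff f α • fourierLp (T := 2 * Real.pi) 2 α)
      (ContinuousMap.toLp (E := ℂ) 2 haarAddCircle ℂ g) := by
    have := (ContinuousMap.toLp (E := ℂ) 2 (haarAddCircle (T := 2 * Real.pi)) ℂ).hasSum hg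
    simpa only [_root_.map_smul] using this
  have heq : hf.toLp f = ContinuousMap.toLp (E := ℂ) 2 haarAddCircle ℂ g := hL2.unique hL2'
  have hae : f =ᵐ[haarAddCircle] g := by
    have h1 := hf.coeFn_toLp
    rw [heq] at h1
    exact h1.symm.trans (ContinuousMap.coeFn_toLp (E := ℂ) (p := 2) haarAddCircle g)
  -- pointwise bound on g
  have hbound : ∀ x, ‖g x - fourierCoeff f 0‖ ≤
      Real.sqrt (∑' α, cweight α) * Real.sqrt (∑' α, w α) := by
    intro x
    have hgx : HasSum (fun α : ℤ => fourierCoeff f α • fourier (T := 2 * Real.pi) α x)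
        (g x) := by
      have := (ContinuousMap.evalCLM ℂ x).hasSum hg
      exact this
    have hnx : ∀ α : ℤ, ‖fourierCoeff f α • fourier (T := 2 * Real.pi) α x‖
        = ‖fourierCoeff f α‖ := by
      intro α
      rw [norm_smul]
      have : ‖fourier (T := 2 * Real.pi) α x‖ = 1 := Circle.norm_coe _
      rw [this, mul_one]
    have hsx : Summable (fun α : ℤ => fourierCoeff f α • fourier (T := 2 * Real.pi) α x) :=
      hgx.summable
    have hsplit := hsx.tsum_eq_add_tsum_ite 0
    rw [hgx.tsum_eq] at hsplit
    have hf0 : fourierCoeff f 0 • fourier (T := 2 * Real.pi) (0 : ℤ) x = fourierCoeff f 0 := by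
      rw [fourier_zero, smul_eq_mul, mul_one]
    have hdiff : g x - fourierCoeff f 0
        = ∑' α : ℤ, if α = 0 then 0 else fourierCoeff f α • fourier (T := 2 * Real.pi) α x := by
      rw [hsplit, hf0]; ring
    rw [hdiff]
    have hsx2 : Summable (fun α : ℤ =>
        ‖if α = 0 then (0:ℂ) else fourierCoeff f α • fourier (T := 2 * Real.pi) α x‖) := by
      apply Summable.of_nonneg_of_le (fun _ => norm_nonneg _) ?_ hnsum
      intro α
      by_cases h : α = 0 <;> simp [h, hnx, Circle.norm_coe]
    calc ‖∑' α : ℤ, if α = 0 then (0:ℂ)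
          else fourierCoeff f α • fourier (T := 2 * Real.pi) α x‖
        ≤ ∑' α : ℤ, ‖if α = 0 then (0:ℂ)
          else fourierCoeff f α • fourier (T := 2 * Real.pi) α x‖ :=
          norm_tsum_le_tsum_norm hsx2
      _ = ∑' α : ℤ, Real.sqrt (cweight α) * Real.sqrt (w α) := by
          apply tsum_congr
          intro α
          by_cases h : α = 0
          · subst h
            rw [if_pos rfl, norm_zero]
            simp [cweight]
          · simp [h, hnx, hkey α, Circle.norm_coe]
      _ ≤ Real.sqrt (∑' α, cweight α) * Real.sqrt (∑' α, w α) :=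
          tsum_sqrt_mul_sqrt cweight_nonneg hw0 summable_cweight hs
  -- conclude
  have hae2 : (fun x => f x - fourierCoeff f 0)
      =ᵐ[haarAddCircle (T := 2 * Real.pi)] (fun x => g x - fourierCoeff f 0) := by
    filter_upwards [hae] with x hx
    rw [hx]
  rw [eLpNorm_congr_ae hae2, eLpNorm_exponent_top]
  exact eLpNormEssSup_le_of_ae_bound (Filter.Eventually.of_forall hbound)
end
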